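/- Suppose (U^n) solves the implicit upwind scheme for linear advection with λ > 0, and let η : ℝ → ℝ be convex and nonnegative. Assume that for every n ∈ ℕ the sequence j ↦ η(U^n_j) is summable over ℤ. Then the discrete entropy does not increase in time: for every n ∈ ℕ, Σ_{j∈ℤ} η(U^n_j) ≤ Σ_{j∈ℤ} η(U^0_j). -/

import Mathlib

open scoped BigOperators

/-- The L1 coefficients `c^{n+1}_k` for the discrete Caputo derivative:
`c^{n+1}_0 = (n+1)^{1-α} - n^{1-α}` and, for `1 ≤ k ≤ n`,
`c^{n+1}_k = 2(n+1-k)^{1-α} - (n+2-k)^{1-α} - (n-k)^{1-α}`. -/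
noncomputable def caputoCoeff (α : ℝ) (n k : ℕ) : ℝ :=
  if k = 0 then ((n : ℝ) + 1) ^ (1 - α) - (n : ℝ) ^ (1 - α)
  else 2 * ((n : ℝ) + 1 - (k : ℝ)) ^ (1 - α) - ((n : ℝ) + 2 - (k : ℝ)) ^ (1 - α)
    - ((n : ℝ) - (k : ℝ)) ^ (1 - α)

/-- `U` solves the implicit upwind scheme for the linear advection equation
with flux `f(u) = a u`, `a > 0`, where `lam = a τ^α / (h Γ(2-α))`. -/
def SolvesImplicitAdvection (α lam : ℝ) (U : ℕ → ℤ → ℝ) : Prop :=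
  ∀ (n : ℕ) (j : ℤ),
    U (n + 1) j = (∑ k ∈ Finset.range (n + 1), caputoCoeff α n k * U k j)
      - lam * (U (n + 1) j - U (n + 1) (j - 1))

lemma caputo_sum (α : ℝ) (hα : α ∈ Set.Ioo (0:ℝ) 1) (n : ℕ) :
    ∑ k ∈ Finset.range (n + 1), caputoCoeff α n k = 1 := by
  obtain ⟨h0, h1⟩ := hα
  set β := 1 - α with hβ
  have hβ0 : 0 < β := by rw [hβ]; linarith
  set d : ℕ → ℝ := fun k => ((n : ℝ) + 1 - k) ^ β - ((n : ℝ) - k) ^ β with hd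
  have key : ∀ i, caputoCoeff α n (i + 1) = d (i + 1) - d i := by
    intro i
    simp only [caputoCoeff, hd, Nat.cast_add, Nat.cast_one]
    rw [if_neg (Nat.succ_ne_zero i)]
    ring_nf
    rw [hβ]; ring
  rw [Finset.sum_range_succ']
  have hsum : ∑ i ∈ Finset.range n, caputoCoeff α n (i + 1) = d n - d 0 := by
    rw [Finset.sum_congr rfl (fun i _ => key i), Finset.sum_range_sub]
  rw [hsum]
  have hdn : d n = 1 := by
    simp only [hd]
    rw [show (n:ℝ) + 1 - n = 1 by ring, show (n:ℝ) - n = 0 by ring,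
      Real.one_rpow, Real.zero_rpow hβ0.ne']
    ring
  have hd0 : d 0 = ((n:ℝ) + 1) ^ β - (n:ℝ) ^ β := by simp [hd]
  have hc0 : caputoCoeff α n 0 = ((n:ℝ) + 1) ^ β - (n:ℝ) ^ β := by
    simp [caputoCoeff, hβ]
  rw [hc0, hdn, hd0]; ring

lemma caputo_nonneg (α : ℝ) (hα : α ∈ Set.Ioo (0:ℝ) 1) (n k : ℕ) (hk : k ≤ n) :
    0 ≤ caputoCoeff α n k := by
  obtain ⟨h0, h1⟩ := hα
  have hβ0 : (0:ℝ) < 1 - α := by linarith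
  have hβ1 : 1 - α < 1 := by linarith
  rcases Nat.eq_zero_or_pos k with rfl | hkpos
  · have hc0 : caputoCoeff α n 0 = ((n:ℝ) + 1) ^ (1 - α) - (n:ℝ) ^ (1 - α) := by
      simp [caputoCoeff]
    rw [hc0, sub_nonneg]
    exact Real.rpow_le_rpow (Nat.cast_nonneg n) (by linarith : (n:ℝ) ≤ (n:ℝ) + 1) hβ0.le
  · simp only [caputoCoeff, if_neg hkpos.ne']
    set x : ℝ := (n:ℝ) + 1 - k with hx
    have hx1 : 1 ≤ x := by
      have : (k:ℝ) ≤ n := Nat.cast_le.2 hk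
      rw [hx]; linarith
    have hconc := (Real.strictConcaveOn_rpow hβ0 hβ1).concaveOn
    have h2 := hconc.2 (show x - 1 ∈ Set.Ici (0:ℝ) by simp; linarith)
      (show x + 1 ∈ Set.Ici (0:ℝ) by simp; linarith)
      (by norm_num : (0:ℝ) ≤ 1/2) (by norm_num : (0:ℝ) ≤ 1/2) (by norm_num)
    rw [smul_eq_mul, smul_eq_mul, smul_eq_mul, smul_eq_mul,
      show (1/2:ℝ) * (x - 1) + 1/2 * (x + 1) = x by ring] at h2
    have e1 : (n:ℝ) + 2 - k = x + 1 := by rw [hx]; ring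
    have e2 : (n:ℝ) - k = x - 1 := by rw [hx]; ring
    rw [e1, e2]
    linarith

/-- the discrete entropy does not increase in time for the implicit
upwind scheme for linear advection: for convex nonnegative `η`,
`Σ_j η(U^n_j) ≤ Σ_j η(U^0_j)` for every `n`. -/
theorem implicit_advection_entropy_decay (α τ h a : ℝ)
    (hα : α ∈ Set.Ioo (0 : ℝ) 1) (hτ : 0 < τ) (hh : 0 < h) (ha : 0 < a)
    (lam : ℝ) (hlam : lam = a * τ ^ α / (h * Real.Gamma (2 - α)))
    (U : ℕ → ℤ → ℝ) (hU : SolvesImplicitAdvection α lam U)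
    (η : ℝ → ℝ) (hη : ConvexOn ℝ Set.univ η) (hη0 : ∀ x, 0 ≤ η x)
    (hsum : ∀ n : ℕ, Summable (fun j : ℤ => η (U n j))) :
    ∀ n : ℕ, ∑' j : ℤ, η (U n j) ≤ ∑' j : ℤ, η (U 0 j) := by
  have hlam0 : 0 < lam := by
    rw [hlam]
    have hg : 0 < Real.Gamma (2 - α) := Real.Gamma_pos_of_pos (by linarith [hα.2])
    have hτα : 0 < τ ^ α := Real.rpow_pos_of_pos hτ α
    positivity
  have h1lam : (0:ℝ) < 1 + lam := by linarith
  set S : ℕ → ℝ := fun n => ∑' j : ℤ, η (U n j) with hS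
  have key : ∀ n : ℕ, (∀ k, k ≤ n → S k ≤ S 0) → S (n + 1) ≤ S 0 := by
    intro n IH
    have hpt : ∀ j : ℤ, η (U (n + 1) j) ≤
        (∑ k ∈ Finset.range (n + 1), caputoCoeff α n k / (1 + lam) * η (U k j))
          + lam / (1 + lam) * η (U (n + 1) (j - 1)) := by
      intro j
      set w : ℕ → ℝ := fun k =>
        if k = n + 1 then lam / (1 + lam) else caputoCoeff α n k / (1 + lam) with hw
      set p : ℕ → ℝ := fun k => if k = n + 1 then U (n + 1) (j - 1) else U k j with hp
      have hw0 : ∀ i ∈ Finset.range (n + 2), 0 ≤ w i := by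
        intro i hi
        simp only [hw]
        split
        · positivity
        · next hne =>
            exact div_nonneg
              (caputo_nonneg α hα n i (by have := Finset.mem_range.1 hi; omega)) h1lam.le
      have hpart : ∑ i ∈ Finset.range (n + 1), w i
          = ∑ i ∈ Finset.range (n + 1), caputoCoeff α n i / (1 + lam) :=
        Finset.sum_congr rfl fun i hi => by
          have hne : i ≠ n + 1 := by have := Finset.mem_range.1 hi; omega
          simp [hw, hne]
      have hw1 : ∑ i ∈ Finset.range (n + 2), w i = 1 := by
        rw [Finset.sum_range_succ, hpart, ← Finset.sum_div, caputo_sum α hα n]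
        simp only [hw, if_pos rfl]
        field_simp
      have hmean : ∑ i ∈ Finset.range (n + 2), w i • p i = U (n + 1) j := by
        rw [Finset.sum_range_succ]
        have hUe := hU n j
        have hfirst : ∑ i ∈ Finset.range (n + 1), w i • p i
            = (∑ i ∈ Finset.range (n + 1), caputoCoeff α n i * U i j) / (1 + lam) := by
          rw [Finset.sum_div]
          refine Finset.sum_congr rfl fun i hi => ?_
          have hne : i ≠ n + 1 := by have := Finset.mem_range.1 hi; omega
          simp only [hw, hp, if_neg hne, smul_eq_mul]
          ring
        rw [hfirst]
        simp only [hw, hp, if_pos rfl, smul_eq_mul]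
        field_simp
        linarith [hUe]
      have hj := hη.map_sum_le hw0 hw1 (fun i _ => Set.mem_univ (p i))
      rw [hmean, Finset.sum_range_succ] at hj
      calc η (U (n + 1) j) ≤ (∑ i ∈ Finset.range (n + 1), w i * η (p i))
            + w (n + 1) * η (p (n + 1)) := hj
        _ = _ := by
            congr 1
            · refine Finset.sum_congr rfl fun i hi => ?_
              have hne : i ≠ n + 1 := by have := Finset.mem_range.1 hi; omega
              simp [hw, hp, hne]
            · simp [hw, hp]
    have hshift : Summable (fun j : ℤ => η (U (n + 1) (j - 1))) :=
      (Equiv.subRight (1:ℤ)).summable_iff.2 (hsum (n + 1))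
    have hterm : ∀ i ∈ Finset.range (n + 1),
        Summable (fun j : ℤ => caputoCoeff α n i / (1 + lam) * η (U i j)) :=
      fun i _ => (hsum i).mul_left _
    have hRHS1 : Summable (fun j : ℤ =>
        ∑ i ∈ Finset.range (n + 1), caputoCoeff α n i / (1 + lam) * η (U i j)) :=
      summable_sum hterm
    have hRHS2 : Summable (fun j : ℤ => lam / (1 + lam) * η (U (n + 1) (j - 1))) :=
      hshift.mul_left _
    have hle : S (n + 1) ≤ ∑' j : ℤ, ((∑ i ∈ Finset.range (n + 1),
        caputoCoeff α n i / (1 + lam) * η (U i j))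
          + lam / (1 + lam) * η (U (n + 1) (j - 1))) :=
      Summable.tsum_le_tsum hpt (hsum (n + 1)) (hRHS1.add hRHS2)
    have hshift_tsum : ∑' j : ℤ, η (U (n + 1) (j - 1)) = S (n + 1) :=
      (Equiv.subRight (1:ℤ)).tsum_eq (fun j => η (U (n + 1) j))
    have heq : ∑' j : ℤ, ((∑ i ∈ Finset.range (n + 1),
        caputoCoeff α n i / (1 + lam) * η (U i j))
          + lam / (1 + lam) * η (U (n + 1) (j - 1)))
        = (∑ i ∈ Finset.range (n + 1), caputoCoeff α n i / (1 + lam) * S i)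
          + lam / (1 + lam) * S (n + 1) := by
      rw [Summable.tsum_add hRHS1 hRHS2, Summable.tsum_finsetSum hterm, tsum_mul_left, hshift_tsum]
      congr 1
      exact Finset.sum_congr rfl fun i _ => tsum_mul_left
    rw [heq] at hle
    have hbound : ∑ i ∈ Finset.range (n + 1), caputoCoeff α n i / (1 + lam) * S i
        ≤ S 0 / (1 + lam) := by
      have hstep : ∑ i ∈ Finset.range (n + 1), caputoCoeff α n i / (1 + lam) * S i
          ≤ ∑ i ∈ Finset.range (n + 1), caputoCoeff α n i / (1 + lam) * S 0 := by
        refine Finset.sum_le_sum fun i hi => ?_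
        have hc : 0 ≤ caputoCoeff α n i / (1 + lam) :=
          div_nonneg (caputo_nonneg α hα n i (by have := Finset.mem_range.1 hi; omega))
            h1lam.le
        exact mul_le_mul_of_nonneg_left (IH i (by have := Finset.mem_range.1 hi; omega)) hc
      calc _ ≤ ∑ i ∈ Finset.range (n + 1), caputoCoeff α n i / (1 + lam) * S 0 := hstep
        _ = S 0 / (1 + lam) := by
            rw [← Finset.sum_mul, ← Finset.sum_div, caputo_sum α hα n]
            ring
    have hfin : S (n + 1) ≤ S 0 / (1 + lam) + lam / (1 + lam) * S (n + 1) := by linarith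
    have hfin2 : S 0 / (1 + lam) + lam / (1 + lam) * S (n + 1)
        = (S 0 + lam * S (n + 1)) / (1 + lam) := by field_simp
    rw [hfin2, le_div_iff₀ h1lam] at hfin
    nlinarith [hfin]
  intro n
  induction n using Nat.strong_induction_on with
  | _ n IH =>
    match n with
    | 0 => exact le_refl _
    | Nat.succ m => exact key m (fun k hk => IH k (by omega))
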